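/- Assume β := β_L − μ·β_H > 0, f > 0 and e_m > 0. If f·e_m < β/(1+β), then w_H⁽²⁾ > w_H⁽¹⁾; and if f·e_m > β/(1+β), then w_H⁽²⁾ < w_H⁽¹⁾. (Paper's Proposition 1, high-fixed-cost case: with carbon-emission constraint the manufacturer's buy-back price to the high-type retailer exceeds the unconstrained one exactly when the carbon reward-penalty charge f·e_m is below the threshold β/(1+β).) -/

import Mathlib

/-- Paper's Proposition 1, high-fixed-cost case. -/
theorem prop1_high
    (a p₁ p_m c c_d c_r c_m βH βL μ π₀ f e_m A β w₁ w₂ : ℝ)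
    (hA : A = p_m + c_m - c_r - c - c_d)
    (hβ : β = βL - μ * βH)
    (hβpos : β > 0) (hf : f > 0) (he : e_m > 0)
    (hw₁ : w₁ = μ * A / 4 + (1 - μ)^2 * A / (4 * β)
        + 4 * π₀ * βH / ((a - p₁)^2 * A) + c + c_d)
    (hw₂ : w₂ = (μ * A - f * e_m) / 4 + ((1 - μ)^2 * A + β - f * e_m) / (4 * β)
        + 4 * π₀ * βH / ((a - p₁)^2 * A) + c + c_d) :
    (f * e_m < β / (1 + β) → w₂ > w₁) ∧ (f * e_m > β / (1 + β) → w₂ < w₁) := by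
  have h1β : (1 : ℝ) + β > 0 := by linarith
  have h4β : (4 : ℝ) * β > 0 := by linarith
  have hdiff : w₂ - w₁ = (β - f * e_m * (1 + β)) / (4 * β) := by
    rw [hw₁, hw₂]; generalize 4 * π₀ * βH / ((a - p₁)^2 * A) = K; field_simp; ring
  constructor
  · intro h
    have h' : f * e_m * (1 + β) < β := (lt_div_iff₀ h1β).mp h
    have : w₂ - w₁ > 0 := by rw [hdiff]; exact div_pos (by linarith) h4β
    linarith
  · intro h
    have h' : f * e_m * (1 + β) > β := (div_lt_iff₀ h1β).mp h
    have : w₂ - w₁ < 0 := by rw [hdiff]; exact div_neg_of_neg_of_pos (by linarith) h4β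
    linarith
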